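/- Let V be an object of a semisimple k-linear rigid monoidal category C and n ≥ 1. The n-th Frobenius–Schur endomorphism FS_V^(n) : V → V is independent of the choice of right dual X of V^⊗(n−1) and of the choice of trivial component of V^⊗n. Moreover, if F : C → D is an equivalence of semisimple k-linear monoidal categories, then F(FS_V^(n)) = FS_{F(V)}^(n) as endomorphisms of F(V). -/

import Mathlib

open CategoryTheory MonoidalCategory Functor.LaxMonoidal Functor.OplaxMonoidal

namespace FSI

variable {C : Type*} [Category C] [MonoidalCategory C] [RightRigidCategory C]
variable {D : Type*} [Category D] [MonoidalCategory D] [RightRigidCategory D]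

/-- The adjunction isomorphism `A : C(I, V ⊗ W) → C(V^∨, W)`,
`A(f) = (ev_V ⊗ W) ∘ Φ⁻¹ ∘ (V^∨ ⊗ f)`. -/
def Amap (V W : C) (f : 𝟙_ C ⟶ V ⊗ W) : Vᘁ ⟶ W :=
  (ρ_ (Vᘁ)).inv ≫ (Vᘁ ◁ f) ≫ (α_ (Vᘁ) V W).inv ≫ (ε_ V (Vᘁ) ▷ W) ≫ (λ_ W).hom

/-- The inverse of the adjunction isomorphism `A`, `A⁻¹(g) = (V ⊗ g) ∘ db_V`. -/
def Ainv (V W : C) (g : Vᘁ ⟶ W) : 𝟙_ C ⟶ V ⊗ W :=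
  η_ V (Vᘁ) ≫ (V ◁ g)

/-- `B : C(V, W) → C(I, W ⊗ V^∨)`, `B(f) = (f ⊗ V^∨) ∘ db_V`. -/
def Bmap (V W : C) (f : V ⟶ W) : 𝟙_ C ⟶ W ⊗ (Vᘁ) :=
  η_ V (Vᘁ) ≫ (f ▷ (Vᘁ))

/-- `T_{V,W} : C(V^∨, W) → C(W^∨, V)`, `T(g) = j_V⁻¹ ∘ g^∨`, defined relative to a chosen
isomorphism `j_V : V ≅ V^∨∨` (a component of a pivotal structure). -/
def Tmap {V W : C} (jV : V ≅ (Vᘁ)ᘁ) (g : Vᘁ ⟶ W) : Wᘁ ⟶ V :=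
  gᘁ ≫ jV.inv

/-- `E_{V,W} = A⁻¹ ∘ T_{V,W} ∘ A : C(I, V ⊗ W) → C(I, W ⊗ V)`. -/
def Emap {V : C} (W : C) (jV : V ≅ (Vᘁ)ᘁ) (f : 𝟙_ C ⟶ V ⊗ W) : 𝟙_ C ⟶ W ⊗ V :=
  Ainv W V (Tmap jV (Amap V W f))

/-- The `n`-fold tensor power with rightmost parenthesization:
`V^⊗0 = I`, `V^⊗(n+1) = V ⊗ V^⊗n`. -/
def pow (V : C) : ℕ → C
  | 0 => 𝟙_ C
  | n + 1 => V ⊗ pow V n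

/-- The coherence isomorphism `Φ^(n+1) : V^⊗n ⊗ V ⟶ V^⊗(n+1)` built from associators
(and unitors). -/
def PhiN (V : C) : ∀ n : ℕ, pow V n ⊗ V ⟶ pow V (n + 1)
  | 0 => (λ_ V).hom ≫ (ρ_ V).inv
  | n + 1 => (α_ V (pow V n) V).hom ≫ (V ◁ PhiN V n)

/-- `E_V^(n+1) = C(I, Φ^(n+1)) ∘ E_{V, V^⊗n} : C(I, V^⊗(n+1)) → C(I, V^⊗(n+1))`.
Here `jj` is the family of components of a pivotal structure. -/
def EN (jj : ∀ X : C, X ≅ (Xᘁ)ᘁ) (V : C) (n : ℕ)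
    (f : 𝟙_ C ⟶ pow V (n + 1)) : 𝟙_ C ⟶ pow V (n + 1) :=
  Emap (pow V n) (jj V) f ≫ PhiN V n

/-- The canonical evaluation exhibiting `Y^∨ ⊗ X^∨` as a dual of `X ⊗ Y`. -/
def tildeEv (X Y : C) : ((Yᘁ) ⊗ (Xᘁ)) ⊗ (X ⊗ Y) ⟶ 𝟙_ C :=
  (α_ (Yᘁ) (Xᘁ) (X ⊗ Y)).hom ≫
    ((Yᘁ) ◁ ((α_ (Xᘁ) X Y).inv ≫ (ε_ X (Xᘁ) ▷ Y) ≫ (λ_ Y).hom)) ≫ ε_ Y (Yᘁ)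

/-- The canonical isomorphism `ζ : Y^∨ ⊗ X^∨ ⟶ (X ⊗ Y)^∨` making the duality functor
monoidal; it is the unique morphism with `ev_{X⊗Y} ∘ (ζ ⊗ (X⊗Y)) = tildeEv`. -/
def zeta (X Y : C) : (Yᘁ) ⊗ (Xᘁ) ⟶ (X ⊗ Y)ᘁ :=
  (ρ_ ((Yᘁ) ⊗ (Xᘁ))).inv ≫ (((Yᘁ) ⊗ (Xᘁ)) ◁ η_ (X ⊗ Y) ((X ⊗ Y)ᘁ)) ≫
    (α_ ((Yᘁ) ⊗ (Xᘁ)) (X ⊗ Y) ((X ⊗ Y)ᘁ)).inv ≫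
      (tildeEv X Y ▷ ((X ⊗ Y)ᘁ)) ≫ (λ_ ((X ⊗ Y)ᘁ)).hom

/-- A pivotal structure on a rigid monoidal category: a monoidal natural isomorphism
`j : Id → (−)^∨∨`. -/
structure Pivotal (C : Type*) [Category C] [MonoidalCategory C] [RightRigidCategory C] where
  j : ∀ X : C, X ≅ (Xᘁ)ᘁ
  naturality : ∀ {X Y : C} (f : X ⟶ Y), f ≫ (j Y).hom = (j X).hom ≫ (fᘁ)ᘁ
  monoidality : ∀ X Y : C,
    ((j X).hom ⊗ₘ (j Y).hom) ≫ zeta (Yᘁ) (Xᘁ) = (j (X ⊗ Y)).hom ≫ (zeta X Y)ᘁ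

/-- The categorical trace `ctr(a) = ev_{V^∨} ∘ (a ⊗ V^∨) ∘ db_V ∈ End(I)` of a morphism
`a : V ⟶ V^∨∨`. -/
def ctr {V : C} (a : V ⟶ (Vᘁ)ᘁ) : 𝟙_ C ⟶ 𝟙_ C :=
  η_ V (Vᘁ) ≫ (a ▷ (Vᘁ)) ≫ ε_ (Vᘁ) ((Vᘁ)ᘁ)

/-- The left pivotal trace `ptr_l(f) = ev_V ∘ (V^∨ ⊗ (f ∘ j_V⁻¹)) ∘ db_{V^∨}`. -/
def ptrl (jj : ∀ X : C, X ≅ (Xᘁ)ᘁ) {V : C} (f : V ⟶ V) : 𝟙_ C ⟶ 𝟙_ C :=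
  η_ (Vᘁ) ((Vᘁ)ᘁ) ≫ ((Vᘁ) ◁ ((jj V).inv ≫ f)) ≫ ε_ V (Vᘁ)

/-- The right pivotal trace `ptr_r(f) = ev_{V^∨} ∘ ((j_V ∘ f) ⊗ V^∨) ∘ db_V`. -/
def ptrr (jj : ∀ X : C, X ≅ (Xᘁ)ᘁ) {V : C} (f : V ⟶ V) : 𝟙_ C ⟶ 𝟙_ C :=
  η_ V (Vᘁ) ≫ ((f ≫ (jj V).hom) ▷ (Vᘁ)) ≫ ε_ (Vᘁ) ((Vᘁ)ᘁ)

/-- A pivotal category is *spherical* if left and right pivotal traces agree. -/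
def Spherical (jj : ∀ X : C, X ≅ (Xᘁ)ᘁ) : Prop :=
  ∀ (V : C) (f : V ⟶ V), ptrl jj f = ptrr jj f

section SemisimpleDefs

variable (k : Type*) [Field k]

/-- An object of a `k`-linear category is *simple* if its endomorphism ring is `k`. -/
def IsSimpleObj {C : Type*} [Category C] [Preadditive C] [CategoryTheory.Linear k C]
    (X : C) : Prop :=
  𝟙 X ≠ 0 ∧ ∀ f : X ⟶ X, ∃ c : k, f = c • 𝟙 X

/-- A `k`-linear monoidal category is *semisimple* if every object is a finite direct sum
of simple objects. -/
def SemisimpleCat (C : Type*) [Category C] [Preadditive C] [CategoryTheory.Linear k C] : Prop :=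
  ∀ X : C, ∃ (n : ℕ) (s : Fin n → C) (a : ∀ i, s i ⟶ X) (b : ∀ i, X ⟶ s i),
    (∀ i, IsSimpleObj k (s i)) ∧ (∀ i, a i ≫ b i = 𝟙 (s i)) ∧
      (∀ i j, i ≠ j → a i ≫ b j = 0) ∧ (∑ i, b i ≫ a i) = 𝟙 X

/-- An object is *trivial* if it is (isomorphic to) a finite direct sum of copies of the
unit object. -/
def IsTrivial {C : Type*} [Category C] [MonoidalCategory C] [Preadditive C] (T : C) : Prop :=
  ∃ (n : ℕ) (a : Fin n → (𝟙_ C ⟶ T)) (b : Fin n → (T ⟶ 𝟙_ C)),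
    (∀ i j, a i ≫ b j = if i = j then 𝟙 (𝟙_ C) else 0) ∧ (∑ i, b i ≫ a i) = 𝟙 T

/-- A trivial (`I`-isotypical) component of an object `V`: a retract `(T, ι, π)` of `V`
with `T` trivial such that `ι ∘ π` is the idempotent of `V` projecting onto the
`I`-isotypical summand. -/
structure TrivialComponent {C : Type*} [Category C] [MonoidalCategory C] [Preadditive C]
    (V : C) where
  T : C
  ι : T ⟶ V
  π : V ⟶ T
  trivial : IsTrivial T
  retract : ι ≫ π = 𝟙 T
  fac_from : ∀ g : 𝟙_ C ⟶ V, g ≫ π ≫ ι = g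
  fac_to : ∀ p : V ⟶ 𝟙_ C, π ≫ ι ≫ p = p

/-- The canonical exchange isomorphisms `τ_{V,T} : V ⊗ T ⟶ T ⊗ V` for `T` trivial:
the unique family natural in `V` and in trivial `T` with `τ_{V,I}` the canonical
isomorphism. -/
structure TrivialExchange (C : Type*) [Category C] [MonoidalCategory C] [Preadditive C] where
  τ : ∀ V T : C, V ⊗ T ⟶ T ⊗ V
  iso : ∀ V T : C, IsTrivial T → IsIso (τ V T)
  natV : ∀ {V V' : C} (f : V ⟶ V') (T : C), IsTrivial T →
    (f ▷ T) ≫ τ V' T = τ V T ≫ (T ◁ f)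
  natT : ∀ (V : C) {T T' : C} (g : T ⟶ T'), IsTrivial T → IsTrivial T' →
    (V ◁ g) ≫ τ V T' = τ V T ≫ (g ▷ V)
  unit : ∀ V : C, τ V (𝟙_ C) = (ρ_ V).hom ≫ (λ_ V).inv

end SemisimpleDefs

section FSDefs

variable {C : Type*} [Category C] [MonoidalCategory C] [Preadditive C]

/-- The `(n+1)`-st Frobenius–Schur endomorphism `FS_V^(n+1) : V ⟶ V`, relative to a choice
of exchange isomorphisms `τ`, a right dual `X` of `V^⊗n` (an object with an exact pairing
`db : I ⟶ X ⊗ V^⊗n`, `ev : V^⊗n ⊗ X ⟶ I`), and a trivial component `t` of `V^⊗(n+1)`. -/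
def FS (τ : ∀ V T : C, V ⊗ T ⟶ T ⊗ V) (V : C) (n : ℕ)
    (X : C) [ExactPairing X (pow V n)] (t : TrivialComponent (pow V (n + 1))) : V ⟶ V :=
  (λ_ V).inv ≫ (η_ X (pow V n) ▷ V) ≫ (α_ X (pow V n) V).hom ≫ (X ◁ PhiN V n) ≫
    (X ◁ t.π) ≫ τ X t.T ≫ (t.ι ▷ X) ≫ (α_ V (pow V n) X).hom ≫
      (V ◁ ε_ X (pow V n)) ≫ (ρ_ V).hom

end FSDefs

section AuxPartOne

variable {C : Type*} [Category C] [MonoidalCategory C] [Preadditive C]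

lemma isTrivial_unit : IsTrivial (𝟙_ C) := by
  refine ⟨1, fun _ => 𝟙 _, fun _ => 𝟙 _, ?_, by simp⟩
  intro i j
  fin_cases i; fin_cases j; simp

lemma triv_after {W : C} (t₁ t₂ : TrivialComponent W) :
    t₁.ι ≫ t₂.π ≫ t₂.ι = t₁.ι := by
  obtain ⟨m, a, b, -, hba⟩ := t₁.trivial
  have e : ∀ {Z : C} (u : t₁.T ⟶ Z), ∑ i, b i ≫ a i ≫ u = u := by
    intro Z u
    simp only [← Category.assoc, ← Preadditive.sum_comp, hba, Category.id_comp]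
  calc t₁.ι ≫ t₂.π ≫ t₂.ι = ∑ i, b i ≫ a i ≫ t₁.ι ≫ t₂.π ≫ t₂.ι := (e _).symm
    _ = ∑ i, b i ≫ a i ≫ t₁.ι := Finset.sum_congr rfl fun i _ => by
          have h := t₂.fac_from (a i ≫ t₁.ι)
          simp only [Category.assoc] at h
          rw [h]
    _ = t₁.ι := e _

lemma triv_before {W : C} (t₁ t₂ : TrivialComponent W) :
    t₁.π ≫ t₁.ι ≫ t₂.π = t₂.π := by
  obtain ⟨m, a, b, -, hba⟩ := t₂.trivial
  have e : ∀ {Z : C} (u : Z ⟶ t₂.T), ∑ i, u ≫ b i ≫ a i = u := by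
    intro Z u
    simp only [← Preadditive.comp_sum, hba, Category.comp_id]
  calc t₁.π ≫ t₁.ι ≫ t₂.π = ∑ i, (t₁.π ≫ t₁.ι ≫ t₂.π) ≫ b i ≫ a i := (e _).symm
    _ = ∑ i, t₂.π ≫ b i ≫ a i := Finset.sum_congr rfl fun i _ => by
          have h := congrArg (fun z => z ≫ a i) (t₁.fac_to (t₂.π ≫ b i))
          simp only [Category.assoc] at h ⊢
          exact h
    _ = t₂.π := e _

lemma FS_triv_indep (te : TrivialExchange C) (V : C) (n : ℕ)
    (X : C) [ExactPairing X (pow V n)] (t₁ t₂ : TrivialComponent (pow V (n + 1))) :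
    FS te.τ V n X t₁ = FS te.τ V n X t₂ := by
  have key : ∀ {Z : C} (h : pow V (n + 1) ⊗ X ⟶ Z),
      (X ◁ t₁.π) ≫ te.τ X t₁.T ≫ (t₁.ι ▷ X) ≫ h =
      (X ◁ t₂.π) ≫ te.τ X t₂.T ≫ (t₂.ι ▷ X) ≫ h := by
    intro Z h
    have h1 : (X ◁ (t₁.ι ≫ t₂.π)) ≫ te.τ X t₂.T =
        te.τ X t₁.T ≫ ((t₁.ι ≫ t₂.π) ▷ X) :=
      te.natT X (t₁.ι ≫ t₂.π) t₁.trivial t₂.trivial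
    calc (X ◁ t₁.π) ≫ te.τ X t₁.T ≫ (t₁.ι ▷ X) ≫ h
        = (X ◁ t₁.π) ≫ te.τ X t₁.T ≫ (((t₁.ι ≫ t₂.π) ≫ t₂.ι) ▷ X) ≫ h := by
          rw [Category.assoc, triv_after t₁ t₂]
      _ = (X ◁ t₁.π) ≫ ((X ◁ (t₁.ι ≫ t₂.π)) ≫ te.τ X t₂.T) ≫ (t₂.ι ▷ X) ≫ h := by
          rw [h1]; simp only [comp_whiskerRight, Category.assoc]
      _ = (X ◁ (t₁.π ≫ t₁.ι ≫ t₂.π)) ≫ te.τ X t₂.T ≫ (t₂.ι ▷ X) ≫ h := by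
          simp only [MonoidalCategory.whiskerLeft_comp, Category.assoc]
      _ = (X ◁ t₂.π) ≫ te.τ X t₂.T ≫ (t₂.ι ▷ X) ≫ h := by
          rw [triv_before t₁ t₂]
  simp only [FS, Category.assoc]
  rw [key]

lemma FS_dual_indep (te : TrivialExchange C) (V : C) (n : ℕ)
    (X₁ X₂ : C) [p₁ : ExactPairing X₁ (pow V n)] [p₂ : ExactPairing X₂ (pow V n)]
    (t : TrivialComponent (pow V (n + 1))) :
    FS te.τ V n X₁ t = FS te.τ V n X₂ t := by
  let u : X₁ ⟶ X₂ :=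
    @leftAdjointMate C _ _ (pow V n) (pow V n) ⟨X₂⟩ ⟨X₁⟩ (𝟙 (pow V n))
  have hcoev : η_ X₁ (pow V n) ≫ (u ▷ pow V n) = η_ X₂ (pow V n) := by
    have h := @coevaluation_comp_leftAdjointMate C _ _ (pow V n) (pow V n) ⟨X₂⟩ ⟨X₁⟩
      (𝟙 (pow V n))
    simpa using h
  have hev : (pow V n ◁ u) ≫ ε_ X₂ (pow V n) = ε_ X₁ (pow V n) := by
    have h := @leftAdjointMate_comp_evaluation C _ _ (pow V n) (pow V n) ⟨X₂⟩ ⟨X₁⟩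
      (𝟙 (pow V n))
    simpa using h
  rw [FS, FS, ← hcoev, ← hev]
  simp only [comp_whiskerRight, MonoidalCategory.whiskerLeft_comp, Category.assoc]
  rw [associator_naturality_left_assoc u (pow V n) V]
  rw [← whisker_exchange_assoc u (PhiN V n)]
  rw [← whisker_exchange_assoc u t.π]
  rw [reassoc_of% te.natV u t.T t.trivial]
  rw [whisker_exchange_assoc t.ι u]
  have hlast : ∀ {Z : C} (h : V ⊗ pow V n ⊗ X₂ ⟶ Z), (pow V (n + 1) ◁ u) ≫
      ((α_ V (pow V n) X₂).hom ≫ h : pow V (n + 1) ⊗ X₂ ⟶ Z) =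
      ((α_ V (pow V n) X₁).hom ≫ V ◁ (pow V n ◁ u) ≫ h : pow V (n + 1) ⊗ X₁ ⟶ Z) :=
    fun h => (Category.assoc _ _ _).symm.trans
      (((associator_naturality_right V (pow V n) u) =≫ h).trans (Category.assoc _ _ _))
  rw [hlast]

end AuxPartOne

section AuxFunctor

variable {C : Type*} [Category C] [MonoidalCategory C]
variable {D : Type*} [Category D] [MonoidalCategory D]

/-- A monoidal functor sends exact pairings to exact pairings. -/
def pushPairing (F : C ⥤ D) [F.Monoidal] (X Y : C) [ExactPairing X Y] :
    ExactPairing (F.obj X) (F.obj Y) where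
  coevaluation' := ε F ≫ F.map (η_ X Y) ≫ δ F X Y
  evaluation' := μ F Y X ≫ F.map (ε_ X Y) ≫ η F
  coevaluation_evaluation' := by
    have h1 : F.obj Y ◁ F.map (η_ X Y) =
        μ F Y (𝟙_ C) ≫ F.map (Y ◁ η_ X Y) ≫ δ F Y (X ⊗ Y) := by
      rw [← μ_natural_right_assoc]
      simp
    have h2 : δ F Y (X ⊗ Y) ≫ F.obj Y ◁ δ F X Y ≫ (α_ _ _ _).inv =
        F.map (α_ Y X Y).inv ≫ δ F (Y ⊗ X) Y ≫ δ F Y X ▷ F.obj Y :=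
      Functor.OplaxMonoidal.associativity_inv F Y X Y
    simp only [MonoidalCategory.whiskerLeft_comp, comp_whiskerRight, Category.assoc]
    rw [h1]
    simp only [Category.assoc]
    rw [reassoc_of% h2]
    rw [Functor.Monoidal.whiskerRight_δ_μ_assoc]
    rw [Functor.OplaxMonoidal.δ_natural_left_assoc]
    rw [← F.map_comp_assoc, ← F.map_comp_assoc]
    simp only [Category.assoc]
    rw [ExactPairing.coevaluation_evaluation]
    rw [F.map_comp]
    simp only [Category.assoc]
    rw [← Functor.LaxMonoidal.right_unitality_assoc]
    rw [← Functor.OplaxMonoidal.left_unitality]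
  evaluation_coevaluation' := by
    have h1 : F.map (η_ X Y) ▷ F.obj X =
        μ F (𝟙_ C) X ≫ F.map (η_ X Y ▷ X) ≫ δ F (X ⊗ Y) X := by
      rw [← μ_natural_left_assoc]
      simp
    have h2 : δ F (X ⊗ Y) X ≫ δ F X Y ▷ F.obj X ≫ (α_ _ _ _).hom =
        F.map (α_ X Y X).hom ≫ δ F X (Y ⊗ X) ≫ F.obj X ◁ δ F Y X :=
      Functor.OplaxMonoidal.associativity F X Y X
    simp only [MonoidalCategory.whiskerLeft_comp, comp_whiskerRight, Category.assoc]
    rw [h1]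
    simp only [Category.assoc]
    rw [reassoc_of% h2]
    rw [Functor.Monoidal.whiskerLeft_δ_μ_assoc]
    rw [Functor.OplaxMonoidal.δ_natural_right_assoc]
    rw [← F.map_comp_assoc, ← F.map_comp_assoc]
    simp only [Category.assoc]
    rw [ExactPairing.evaluation_coevaluation]
    rw [F.map_comp]
    simp only [Category.assoc]
    rw [← Functor.LaxMonoidal.left_unitality_assoc]
    rw [← Functor.OplaxMonoidal.right_unitality]

/-- The canonical isomorphism `F(V^⊗n) ≅ (F V)^⊗n` for a monoidal functor. -/
def powIso (F : C ⥤ D) [F.Monoidal] (V : C) : ∀ n : ℕ, F.obj (pow V n) ≅ pow (F.obj V) n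
  | 0 => (Functor.Monoidal.εIso F).symm
  | n + 1 => (Functor.Monoidal.μIso F V (pow V n)).symm ≪≫
      whiskerLeftIso (F.obj V) (powIso F V n)

@[simp] lemma powIso_zero_hom (F : C ⥤ D) [F.Monoidal] (V : C) :
    (powIso F V 0).hom = η F := rfl

@[simp] lemma powIso_zero_inv (F : C ⥤ D) [F.Monoidal] (V : C) :
    (powIso F V 0).inv = ε F := rfl

@[simp] lemma powIso_succ_hom (F : C ⥤ D) [F.Monoidal] (V : C) (n : ℕ) :
    (powIso F V (n + 1)).hom = (δ F V (pow V n) ≫ F.obj V ◁ (powIso F V n).hom :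
        F.obj (pow V (n + 1)) ⟶ pow (F.obj V) (n + 1)) := rfl

@[simp] lemma powIso_succ_inv (F : C ⥤ D) [F.Monoidal] (V : C) (n : ℕ) :
    (powIso F V (n + 1)).inv = (F.obj V ◁ (powIso F V n).inv ≫ μ F V (pow V n) :
        pow (F.obj V) (n + 1) ⟶ F.obj (pow V (n + 1))) := rfl

lemma map_PhiN (F : C ⥤ D) [F.Monoidal] (V : C) (n : ℕ) :
    μ F (pow V n) V ≫ F.map (PhiN V n) =
      ((powIso F V n).hom ▷ F.obj V) ≫ PhiN (F.obj V) n ≫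
        (F.obj V ◁ (powIso F V n).inv) ≫ μ F V (pow V n) := by
  induction n with
  | zero =>
      have hL : (η F ▷ F.obj V) ≫ (λ_ (F.obj V)).hom = μ F (𝟙_ C) V ≫ F.map (λ_ V).hom := by
        rw [← Functor.OplaxMonoidal.left_unitality_hom F V, Functor.Monoidal.μ_δ_assoc]
      have hR : (ρ_ (F.obj V)).inv ≫ (F.obj V ◁ ε F) ≫ μ F V (𝟙_ C) = F.map (ρ_ V).inv :=
        (Functor.Monoidal.map_rightUnitor_inv F V).symm
      show μ F (𝟙_ C) V ≫ F.map ((λ_ V).hom ≫ (ρ_ V).inv) =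
        (η F ▷ F.obj V) ≫ ((λ_ (F.obj V)).hom ≫ (ρ_ (F.obj V)).inv) ≫
          (F.obj V ◁ ε F) ≫ μ F V (𝟙_ C)
      rw [F.map_comp, ← hR]
      simp only [Category.assoc]
      rw [← reassoc_of% hL]
  | succ n ih =>
      rw [show PhiN V (n + 1) = (α_ V (pow V n) V).hom ≫ (V ◁ PhiN V n) from rfl]
      rw [show PhiN (F.obj V) (n + 1) =
        (α_ (F.obj V) (pow (F.obj V) n) (F.obj V)).hom ≫
          (F.obj V ◁ PhiN (F.obj V) n) from rfl]
      erw [F.map_comp, Functor.Monoidal.map_associator]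
      rw [powIso_succ_hom, powIso_succ_inv]
      calc μ F (V ⊗ pow V n) V ≫
            (δ F (V ⊗ pow V n) V ≫ δ F V (pow V n) ▷ F.obj V ≫ (α_ _ _ _).hom ≫
              F.obj V ◁ μ F (pow V n) V ≫ μ F V (pow V n ⊗ V)) ≫ F.map (V ◁ PhiN V n)
          = δ F V (pow V n) ▷ F.obj V ≫ (α_ _ _ _).hom ≫
              F.obj V ◁ (μ F (pow V n) V ≫ F.map (PhiN V n)) ≫ μ F V (pow V (n + 1)) := by
            simp only [Category.assoc]
            rw [Functor.Monoidal.μ_δ_assoc]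
            rw [← μ_natural_right]
            simp only [MonoidalCategory.whiskerLeft_comp, Category.assoc]
        _ = δ F V (pow V n) ▷ F.obj V ≫ (α_ _ _ _).hom ≫
              F.obj V ◁ ((powIso F V n).hom ▷ F.obj V ≫ PhiN (F.obj V) n ≫
                F.obj V ◁ (powIso F V n).inv ≫ μ F V (pow V n)) ≫
              μ F V (pow V (n + 1)) := by rw [ih]; rfl
        _ = ((δ F V (pow V n) ≫ F.obj V ◁ (powIso F V n).hom) ▷ F.obj V) ≫
              ((α_ (F.obj V) (pow (F.obj V) n) (F.obj V)).hom ≫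
                F.obj V ◁ PhiN (F.obj V) n) ≫
              (F.obj V ◁ (F.obj V ◁ (powIso F V n).inv ≫ μ F V (pow V n))) ≫
              μ F V (pow V (n + 1)) := by
            rw [comp_whiskerRight]
            simp only [MonoidalCategory.whiskerLeft_comp, Category.assoc]
            erw [Category.assoc, Category.assoc]
            rw [associator_naturality_middle_assoc]

section Preadd

variable [Preadditive C] [Preadditive D]

lemma isTrivial_map (F : C ⥤ D) [F.Monoidal] [F.Additive] {T : C} (h : IsTrivial T) :
    IsTrivial (F.obj T) := by
  obtain ⟨m, a, b, hab, hba⟩ := h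
  refine ⟨m, fun i => ε F ≫ F.map (a i), fun i => F.map (b i) ≫ η F, ?_, ?_⟩
  · intro i j
    have : a i ≫ b j = if i = j then 𝟙 (𝟙_ C) else 0 := hab i j
    rw [Category.assoc, ← F.map_comp_assoc, this]
    split
    · simp
    · simp
  · have : ∀ i : Fin m, (F.map (b i) ≫ η F) ≫ ε F ≫ F.map (a i) = F.map (b i ≫ a i) := by
      intro i
      rw [Category.assoc, Functor.Monoidal.η_ε_assoc, ← F.map_comp]
    calc ∑ i, (F.map (b i) ≫ η F) ≫ ε F ≫ F.map (a i)
        = ∑ i, F.map (b i ≫ a i) := Finset.sum_congr rfl fun i _ => this i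
      _ = F.map (∑ i, b i ≫ a i) := (F.map_sum _ _).symm
      _ = 𝟙 (F.obj T) := by rw [hba, F.map_id]

/-- Transport of a trivial component along a monoidal equivalence. -/
def pushTriv (F : C ⥤ D) [F.Monoidal] [F.Additive] [F.Full] {W : C}
    (t : TrivialComponent W) {W' : D} (i : F.obj W ≅ W') : TrivialComponent W' where
  T := F.obj t.T
  ι := F.map t.ι ≫ i.hom
  π := i.inv ≫ F.map t.π
  trivial := isTrivial_map F t.trivial
  retract := by rw [Category.assoc, Iso.hom_inv_id_assoc, ← F.map_comp, t.retract, F.map_id]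
  fac_from := by
    intro g
    have key : ∀ h : 𝟙_ D ⟶ F.obj W, h ≫ F.map (t.π ≫ t.ι) = h := by
      intro h
      obtain ⟨h₀, hh₀⟩ := F.map_surjective (η F ≫ h)
      have hh : h = ε F ≫ F.map h₀ := by rw [hh₀, Functor.Monoidal.ε_η_assoc]
      rw [hh, Category.assoc, ← F.map_comp]
      have := t.fac_from h₀
      rw [this]
    have := key (g ≫ i.inv)
    rw [Category.assoc, F.map_comp] at this
    calc g ≫ (i.inv ≫ F.map t.π) ≫ F.map t.ι ≫ i.hom
        = (g ≫ i.inv ≫ F.map t.π ≫ F.map t.ι) ≫ i.hom := by simp only [Category.assoc]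
      _ = (g ≫ i.inv) ≫ i.hom := by rw [this]
      _ = g := by simp
  fac_to := by
    intro p
    have key : ∀ h : F.obj W ⟶ 𝟙_ D, F.map (t.π ≫ t.ι) ≫ h = h := by
      intro h
      obtain ⟨h₀, hh₀⟩ := F.map_surjective (h ≫ ε F)
      have hh : h = F.map h₀ ≫ η F := by
        rw [hh₀, Category.assoc, Functor.Monoidal.ε_η, Category.comp_id]
      rw [hh, ← F.map_comp_assoc]
      have := t.fac_to h₀
      rw [← Category.assoc] at this
      rw [this]
    have := key (i.hom ≫ p)
    rw [F.map_comp, Category.assoc] at this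
    simp only [Category.assoc]
    rw [this, Iso.inv_hom_id_assoc]

lemma tau_formula [MonoidalPreadditive C] (te : TrivialExchange C) (X : C) {T : C}
    (hT : IsTrivial T) {m : ℕ} (a : Fin m → (𝟙_ C ⟶ T)) (b : Fin m → (T ⟶ 𝟙_ C))
    (hba : ∑ i, b i ≫ a i = 𝟙 T) :
    te.τ X T = ∑ i, (X ◁ b i) ≫ (ρ_ X).hom ≫ (λ_ X).inv ≫ (a i ▷ X) := by
  have h0 : te.τ X T = te.τ X T ≫ ((∑ i, b i ≫ a i) ▷ X) := by
    rw [hba, MonoidalCategory.id_whiskerRight, Category.comp_id]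
  rw [h0, CategoryTheory.sum_whiskerRight, Preadditive.comp_sum]
  refine Finset.sum_congr rfl fun i _ => ?_
  rw [comp_whiskerRight, ← Category.assoc, ← te.natT X (b i) hT isTrivial_unit, te.unit]
  simp only [Category.assoc]

lemma map_tau [MonoidalPreadditive C] [MonoidalPreadditive D]
    (F : C ⥤ D) [F.Monoidal] [F.Additive]
    (tC : TrivialExchange C) (tD : TrivialExchange D)
    (X : C) {T : C} (hT : IsTrivial T) :
    F.map (tC.τ X T) = δ F X T ≫ tD.τ (F.obj X) (F.obj T) ≫ μ F T X := by
  obtain ⟨m, a, b, hab, hba⟩ := hT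
  have hba' : ∑ i, (F.map (b i) ≫ η F) ≫ (ε F ≫ F.map (a i)) = 𝟙 (F.obj T) := by
    have e : ∀ i : Fin m, (F.map (b i) ≫ η F) ≫ ε F ≫ F.map (a i) = F.map (b i ≫ a i) := by
      intro i
      rw [Category.assoc, Functor.Monoidal.η_ε_assoc, ← F.map_comp]
    calc ∑ i, (F.map (b i) ≫ η F) ≫ ε F ≫ F.map (a i)
        = ∑ i, F.map (b i ≫ a i) := Finset.sum_congr rfl fun i _ => e i
      _ = F.map (∑ i, b i ≫ a i) := (F.map_sum _ _).symm
      _ = 𝟙 (F.obj T) := by rw [hba, F.map_id]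
  rw [tau_formula tC X ⟨m, a, b, hab, hba⟩ a b hba,
    tau_formula tD (F.obj X) (isTrivial_map F ⟨m, a, b, hab, hba⟩)
      (fun i => ε F ≫ F.map (a i)) (fun i => F.map (b i) ≫ η F) hba',
    Functor.map_sum, Preadditive.sum_comp, Preadditive.comp_sum]
  refine Finset.sum_congr rfl fun i _ => ?_
  simp only [F.map_comp, Functor.Monoidal.map_whiskerLeft, Functor.Monoidal.map_whiskerRight,
    Functor.Monoidal.map_rightUnitor, Functor.Monoidal.map_leftUnitor_inv,
    MonoidalCategory.whiskerLeft_comp, comp_whiskerRight, Category.assoc,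
    Functor.Monoidal.μ_δ_assoc]

/-- The transported exact pairing exhibiting `F X` as left dual of `(F V)^⊗n`. -/
def pushPairingPow (F : C ⥤ D) [F.Monoidal] (V : C) (n : ℕ) (X : C)
    [ExactPairing X (pow V n)] : ExactPairing (F.obj X) (pow (F.obj V) n) :=
  letI := pushPairing F X (pow V n)
  exactPairingCongrRight (powIso F V n).symm

lemma map_FS [MonoidalPreadditive C] [MonoidalPreadditive D]
    (F : C ⥤ D) [F.Monoidal] [F.Additive] [F.Full]
    (tC : TrivialExchange C) (tD : TrivialExchange D) (V : C) (n : ℕ)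
    (X : C) [ExactPairing X (pow V n)] (t : TrivialComponent (pow V (n + 1))) :
    F.map (FS tC.τ V n X t) =
      @FS D _ _ _ tD.τ (F.obj V) n (F.obj X) (pushPairingPow F V n X)
        (pushTriv F t (powIso F V (n + 1))) := by
  letI : ExactPairing (F.obj X) (F.obj (pow V n)) := pushPairing F X (pow V n)
  letI instP : ExactPairing (F.obj X) (pow (F.obj V) n) := pushPairingPow F V n X
  have hcoe : (η_ (F.obj X) (pow (F.obj V) n)) =
      ε F ≫ F.map (η_ X (pow V n)) ≫ δ F X (pow V n) ≫
        (F.obj X ◁ (powIso F V n).hom) := by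
    show (ε F ≫ F.map (η_ X (pow V n)) ≫ δ F X (pow V n)) ≫
        (F.obj X ◁ (powIso F V n).hom) = _
    simp only [Category.assoc]
  have hev : (ε_ (F.obj X) (pow (F.obj V) n)) =
      ((powIso F V n).inv ▷ F.obj X) ≫ μ F (pow V n) X ≫ F.map (ε_ X (pow V n)) ≫ η F :=
    rfl
  rw [FS, FS]
  simp only [F.map_comp]
  rw [map_tau F tC tD X t.trivial]
  simp only [Functor.Monoidal.map_leftUnitor_inv, Functor.Monoidal.map_rightUnitor,
    Functor.Monoidal.map_whiskerLeft, Functor.Monoidal.map_whiskerRight,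
    Functor.Monoidal.map_associator, Category.assoc]
  simp only [Functor.Monoidal.μ_δ_assoc]
  rw [hcoe, hev]
  simp only [pushTriv, powIso_succ_hom, powIso_succ_inv, comp_whiskerRight,
    MonoidalCategory.whiskerLeft_comp, Category.assoc]
  rw [associator_naturality_middle_assoc]
  have h1 : ∀ {Z : D} (h : F.obj X ⊗ F.obj (pow V (n + 1)) ⟶ Z),
      F.obj X ◁ μ F (pow V n) V ≫ F.obj X ◁ F.map (PhiN V n) ≫ h =
      F.obj X ◁ ((powIso F V n).hom ▷ F.obj V) ≫ F.obj X ◁ PhiN (F.obj V) n ≫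
        F.obj X ◁ (F.obj V ◁ (powIso F V n).inv ≫ μ F V (pow V n) :
          pow (F.obj V) (n + 1) ⟶ F.obj (pow V (n + 1))) ≫ h := by
    intro Z h
    rw [← MonoidalCategory.whiskerLeft_comp_assoc, map_PhiN,
      ← MonoidalCategory.whiskerLeft_comp_assoc, ← MonoidalCategory.whiskerLeft_comp_assoc, Category.assoc]
    rfl
  rw [← h1]
  erw [comp_whiskerRight, Category.assoc]
  erw [associator_naturality_middle_assoc]
  have h2 : F.obj V ◁ ((powIso F V n).hom ▷ F.obj X) ≫
      F.obj V ◁ ((powIso F V n).inv ▷ F.obj X) = 𝟙 _ := by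
    rw [← MonoidalCategory.whiskerLeft_comp, ← comp_whiskerRight, Iso.hom_inv_id,
      id_whiskerRight, MonoidalCategory.whiskerLeft_id]
  rw [reassoc_of% h2]
  have h3 : ∀ {Z : D} (h : F.obj (V ⊗ pow V n) ⊗ F.obj X ⟶ Z), μ F (pow V (n + 1)) X ≫
      CategoryStruct.comp (X := F.obj ((V ⊗ pow V n) ⊗ X)) (δ F (V ⊗ pow V n) X) h = h :=
    by intro Z h; exact Functor.Monoidal.μ_δ_assoc (F := F) (V ⊗ pow V n) X h
  erw [F.map_comp, Functor.Monoidal.map_associator_assoc]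
  simp only [Functor.Monoidal.map_rightUnitor, Functor.Monoidal.map_whiskerLeft, F.map_comp,
    Category.assoc, Functor.Monoidal.μ_δ_assoc]
  rw [h3]
  rfl

end Preadd

end AuxFunctor

/-- The Frobenius–Schur endomorphism `FS_V^(n)` is independent of the
choice of right dual of `V^⊗(n−1)` and of trivial component of `V^⊗n`, and is preserved by
equivalences of semisimple `k`-linear monoidal categories. (Stated for `FS^(n+1)`,
`n ≥ 0`.) -/
theorem statement16 (k : Type*) [Field k]
    [Abelian C] [CategoryTheory.Linear k C] [MonoidalPreadditive C] [MonoidalLinear k C]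
    [∀ X Y : C, FiniteDimensional k (X ⟶ Y)]
    [Abelian D] [CategoryTheory.Linear k D] [MonoidalPreadditive D] [MonoidalLinear k D]
    [∀ X Y : D, FiniteDimensional k (X ⟶ Y)]
    (hC : SemisimpleCat k C) (hD : SemisimpleCat k D)
    (hIC : IsSimpleObj k (𝟙_ C)) (hID : IsSimpleObj k (𝟙_ D))
    (tC : TrivialExchange C) (tD : TrivialExchange D)
    (V : C) (n : ℕ)
    (X₁ X₂ : C) [ExactPairing X₁ (pow V n)] [ExactPairing X₂ (pow V n)]
    (t₁ t₂ : TrivialComponent (pow V (n + 1))) :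
    FS tC.τ V n X₁ t₁ = FS tC.τ V n X₂ t₂ ∧
    (∀ (F : C ⥤ D) [F.Monoidal] [F.Additive] [F.Linear k] [F.IsEquivalence]
      (Y : D) [ExactPairing Y (pow (F.obj V) n)]
      (s : TrivialComponent (pow (F.obj V) (n + 1))),
      F.map (FS tC.τ V n X₁ t₁) = FS tD.τ (F.obj V) n Y s) := by
  constructor
  · exact (FS_dual_indep tC V n X₁ X₂ t₁).trans (FS_triv_indep tC V n X₂ t₁ t₂)
  · intro F _ _ _ _ Y _ s
    letI : ExactPairing (F.obj X₁) (pow (F.obj V) n) := pushPairingPow F V n X₁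
    rw [map_FS F tC tD V n X₁ t₁]
    exact (FS_dual_indep tD (F.obj V) n (F.obj X₁) Y
      (pushTriv F t₁ (powIso F V (n + 1)))).trans
      (FS_triv_indep tD (F.obj V) n Y (pushTriv F t₁ (powIso F V (n + 1))) s)

end FSI
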